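/- Let f : X → {0,1} be any fixed classifier and ε ∈ (0, 1). With probability at least 1 − 2p·exp(−ε²N/6) over the flipping noise, for each i ∈ {1,…,p}: ŵ(f)_i lies in the interval [Σ_{j=1}^p H_{ji}·w(f)_j − ε, Σ_{j=1}^p H_{ji}·w(f)_j + ε]. -/

import Mathlib

open scoped Classical

noncomputable section

/-- Empirical frequency of a predicate over `N` samples. -/
def empFreq (N : ℕ) (P : Fin N → Prop) : ℝ :=
  ((Finset.univ.filter P).card : ℝ) / N

/-- Probability, over independent flipping noise governed by the stochastic matrix `H`,
of an event on the noisy (non-binary) protected attributes. -/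
def noiseProbP (N p : ℕ) (z : Fin N → Fin p) (H : Matrix (Fin p) (Fin p) ℝ)
    (E : (Fin N → Fin p) → Prop) : ℝ :=
  ∑ zh : Fin N → Fin p, if E zh then ∏ a, H (z a) (zh a) else 0

/-- `w(f)_i` (resp. `ŵ(f)_i`), for the attribute assignment `zz`. -/
def wVec {X : Type} (N p : ℕ) (x : Fin N → X) (y : Fin N → Bool)
    (E' : Set (Bool × Bool)) (f : X → Bool) (zz : Fin N → Fin p) (i : Fin p) : ℝ :=
  empFreq N (fun a => (f (x a), y a) ∈ E' ∧ zz a = i)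

/-- `u(f)_i` (resp. `û(f)_i`), for the attribute assignment `zz`. -/
def uVec {X : Type} (N p : ℕ) (x : Fin N → X) (y : Fin N → Bool)
    (E E' : Set (Bool × Bool)) (f : X → Bool) (zz : Fin N → Fin p) (i : Fin p) : ℝ :=
  empFreq N (fun a => ((f (x a), y a) ∈ E ∧ (f (x a), y a) ∈ E') ∧ zz a = i)

/-- `M`, the maximum ℓ1-norm of a row of `(Hᵀ)⁻¹`. -/
def Mconst (p : ℕ) (H : Matrix (Fin p) (Fin p) ℝ) : ℝ :=
  ⨆ i : Fin p, ∑ j, |(H.transpose)⁻¹ i j|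

section Helpers
set_option maxHeartbeats 1000000

private lemma exp_taylor_le' {t : ℝ} (ht : |t| ≤ 1) : Real.exp t ≤ 1 + t + 3/4 * t ^ 2 := by
  have h := Real.exp_bound ht (n := 2) (by norm_num)
  have h2 : ∑ m ∈ Finset.range 2, t ^ m / (m.factorial : ℝ) = 1 + t := by
    simp [Finset.sum_range_succ]
  rw [h2] at h
  have h3 := (abs_le.mp h).2
  have habs : |t| ^ 2 = t ^ 2 := sq_abs t
  have h4 : ((2:ℕ).succ : ℝ) / (((2:ℕ).factorial : ℝ) * (2:ℕ)) = 3/4 := by norm_num [Nat.factorial]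
  rw [habs, h4] at h3
  linarith

private lemma factor_bound' {q t : ℝ} (hq0 : 0 ≤ q) (hq1 : q ≤ 1) (ht : |t| ≤ 1) :
    Real.exp (-(t * q)) * (1 + q * (Real.exp t - 1)) ≤ Real.exp (3/4 * t ^ 2) := by
  have h1 : 1 + q * (Real.exp t - 1) ≤ Real.exp (q * (Real.exp t - 1)) := by
    have := Real.add_one_le_exp (q * (Real.exp t - 1)); linarith
  have h2 : Real.exp (-(t*q)) * (1 + q * (Real.exp t - 1))
      ≤ Real.exp (-(t*q)) * Real.exp (q * (Real.exp t - 1)) :=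
    mul_le_mul_of_nonneg_left h1 (Real.exp_nonneg _)
  rw [← Real.exp_add] at h2
  refine h2.trans (Real.exp_le_exp.mpr ?_)
  have he : Real.exp t - 1 - t ≤ 3/4 * t^2 := by have := exp_taylor_le' ht; linarith
  have he0 : 0 ≤ Real.exp t - 1 - t := by have := Real.add_one_le_exp t; linarith
  nlinarith

private lemma indep_prod' (N p : ℕ) (z : Fin N → Fin p) (H : Matrix (Fin p) (Fin p) ℝ)
    (φ : Fin N → Fin p → ℝ) :
    ∑ zh : Fin N → Fin p, (∏ a, H (z a) (zh a)) * ∏ a, φ a (zh a)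
      = ∏ a, ∑ j, H (z a) j * φ a j := by
  rw [Finset.prod_univ_sum fun _ => Finset.univ, Fintype.piFinset_univ]
  exact Finset.sum_congr rfl fun zh _ => Finset.prod_mul_distrib.symm

private lemma inner_eq {p : ℕ} (r : Fin p → ℝ) (hr : ∑ j, r j = 1)
    (cv t : ℝ) (i : Fin p) :
    ∑ j, r j * Real.exp (t * (cv * (if j = i then 1 else 0) - cv * r i))
      = Real.exp (-(t * (cv * r i))) * (1 + r i * (Real.exp (t * cv) - 1)) := by
  have hφval : ∀ j : Fin p, Real.exp (t * (cv * (if j = i then 1 else 0) - cv * r i))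
      = Real.exp (-(t * (cv * r i))) * (if j = i then Real.exp (t * cv) else 1) := by
    intro j
    split_ifs with hj
    · rw [← Real.exp_add]; congr 1; ring
    · rw [mul_one]; congr 1; ring
  simp_rw [hφval]
  have hrearr : ∑ j, r j * (Real.exp (-(t * (cv * r i))) * (if j = i then Real.exp (t * cv) else 1))
      = Real.exp (-(t * (cv * r i))) * ∑ j, r j * (if j = i then Real.exp (t * cv) else 1) := by
    rw [Finset.mul_sum]; exact Finset.sum_congr rfl fun j _ => by ring
  rw [hrearr]
  congr 1
  have hsplit : ∀ j : Fin p, r j * (if j = i then Real.exp (t * cv) else 1)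
      = r j + (if j = i then r j * (Real.exp (t * cv) - 1) else 0) := by
    intro j; split_ifs <;> ring
  simp_rw [hsplit]
  rw [Finset.sum_add_distrib, hr, Finset.sum_ite_eq' Finset.univ i]
  simp only [Finset.mem_univ, if_true]

private lemma mgf_le (N p : ℕ) (z : Fin N → Fin p) (H : Matrix (Fin p) (Fin p) ℝ)
    (hH01 : ∀ i j, 0 ≤ H i j ∧ H i j ≤ 1) (hrow : ∀ i, ∑ j, H i j = 1)
    (c : Fin N → ℝ) (hc : ∀ a, c a = 0 ∨ c a = 1) (i : Fin p)
    {t : ℝ} (ht : |t| ≤ 1) :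
    ∑ zh : Fin N → Fin p, (∏ a, H (z a) (zh a)) *
        Real.exp (t * ((∑ a, c a * (if zh a = i then 1 else 0)) - ∑ a, c a * H (z a) i))
      ≤ Real.exp (3/4 * t ^ 2 * N) := by
  have hexp : ∀ zh : Fin N → Fin p,
      Real.exp (t * ((∑ a, c a * (if zh a = i then 1 else 0)) - ∑ a, c a * H (z a) i))
        = ∏ a, Real.exp (t * (c a * (if zh a = i then 1 else 0) - c a * H (z a) i)) := by
    intro zh
    rw [← Real.exp_sum]
    congr 1
    rw [← Finset.sum_sub_distrib, Finset.mul_sum]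
  have hbound : ∀ a : Fin N,
      (∑ j, H (z a) j * Real.exp (t * (c a * (if j = i then 1 else 0) - c a * H (z a) i)))
        ≤ Real.exp (3/4 * t ^ 2) := by
    intro a
    rw [inner_eq (H (z a)) (hrow (z a)) (c a) t i]
    rcases hc a with h | h
    · rw [h]
      have h1 : (1:ℝ) ≤ Real.exp (3/4 * t ^ 2) := Real.one_le_exp (by positivity)
      simp only [zero_mul, mul_zero, neg_zero, Real.exp_zero, one_mul, add_zero]
      convert h1 using 2 <;> ring
    · rw [h]
      simp only [one_mul, mul_one]
      exact factor_bound' (hH01 (z a) i).1 (hH01 (z a) i).2 ht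
  calc ∑ zh : Fin N → Fin p, (∏ a, H (z a) (zh a)) *
        Real.exp (t * ((∑ a, c a * (if zh a = i then 1 else 0)) - ∑ a, c a * H (z a) i))
      = ∑ zh : Fin N → Fin p, (∏ a, H (z a) (zh a)) *
          ∏ a, Real.exp (t * (c a * (if zh a = i then 1 else 0) - c a * H (z a) i)) := by
        exact Finset.sum_congr rfl fun zh _ => by rw [hexp zh]
    _ = ∏ a, ∑ j, H (z a) j * Real.exp (t * (c a * (if j = i then 1 else 0) - c a * H (z a) i)) :=
        indep_prod' N p z H
          (fun a j => Real.exp (t * (c a * (if j = i then 1 else 0) - c a * H (z a) i)))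
    _ ≤ ∏ _a : Fin N, Real.exp (3/4 * t ^ 2) := by
        apply Finset.prod_le_prod
        · intro a _
          apply Finset.sum_nonneg
          intro j _
          exact mul_nonneg (hH01 (z a) j).1 (Real.exp_nonneg _)
        · intro a _; exact hbound a
    _ = Real.exp (3/4 * t ^ 2 * N) := by
        rw [Finset.prod_const, Finset.card_univ, Fintype.card_fin, ← Real.exp_nat_mul, mul_comm]

private lemma sum_Wt (N p : ℕ) (z : Fin N → Fin p) (H : Matrix (Fin p) (Fin p) ℝ)
    (hrow : ∀ i, ∑ j, H i j = 1) :
    ∑ zh : Fin N → Fin p, ∏ a, H (z a) (zh a) = 1 := by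
  have := indep_prod' N p z H (fun _ _ => 1)
  simpa [hrow] using this

private lemma tail_le (N p : ℕ) (z : Fin N → Fin p) (H : Matrix (Fin p) (Fin p) ℝ)
    (hH01 : ∀ i j, 0 ≤ H i j ∧ H i j ≤ 1) (hrow : ∀ i, ∑ j, H i j = 1)
    (c : Fin N → ℝ) (hc : ∀ a, c a = 0 ∨ c a = 1) (i : Fin p)
    {ε t : ℝ} (ht : |t| ≤ 1) (ht2 : t ^ 2 = ε ^ 2)
    (E : (Fin N → Fin p) → Prop)
    (hE : ∀ zh, E zh → ε ^ 2 * N ≤ t * ((∑ a, c a * (if zh a = i then 1 else 0))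
        - ∑ a, c a * H (z a) i)) :
    noiseProbP N p z H E ≤ Real.exp (-(ε ^ 2 * N) / 4) := by
  have hWn : ∀ zh : Fin N → Fin p, 0 ≤ ∏ a, H (z a) (zh a) :=
    fun zh => Finset.prod_nonneg fun a _ => (hH01 _ _).1
  have hstep : noiseProbP N p z H E ≤ ∑ zh : Fin N → Fin p, Real.exp (-(ε^2 * N)) *
      ((∏ a, H (z a) (zh a)) *
        Real.exp (t * ((∑ a, c a * (if zh a = i then 1 else 0)) - ∑ a, c a * H (z a) i))) := by
    unfold noiseProbP
    apply Finset.sum_le_sum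
    intro zh _
    split_ifs with h
    · have h1 : (1:ℝ) ≤ Real.exp (-(ε^2*N)) *
          Real.exp (t * ((∑ a, c a * (if zh a = i then 1 else 0)) - ∑ a, c a * H (z a) i)) := by
        rw [← Real.exp_add]
        exact Real.one_le_exp (by have := hE zh h; linarith)
      calc (∏ a, H (z a) (zh a)) = (∏ a, H (z a) (zh a)) * 1 := (mul_one _).symm
        _ ≤ (∏ a, H (z a) (zh a)) * (Real.exp (-(ε^2*N)) * Real.exp (t * _)) :=
            mul_le_mul_of_nonneg_left h1 (hWn zh)
        _ = Real.exp (-(ε^2*N)) * ((∏ a, H (z a) (zh a)) * Real.exp (t * _)) := by ring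
    · exact mul_nonneg (Real.exp_nonneg _) (mul_nonneg (hWn zh) (Real.exp_nonneg _))
  refine hstep.trans ?_
  rw [← Finset.mul_sum]
  have hm := mgf_le N p z H hH01 hrow c hc i ht
  calc Real.exp (-(ε^2*N)) * ∑ zh : Fin N → Fin p, (∏ a, H (z a) (zh a)) *
        Real.exp (t * ((∑ a, c a * (if zh a = i then 1 else 0)) - ∑ a, c a * H (z a) i))
      ≤ Real.exp (-(ε^2*N)) * Real.exp (3/4 * t ^ 2 * N) :=
        mul_le_mul_of_nonneg_left hm (Real.exp_nonneg _)
    _ = Real.exp (-(ε ^ 2 * N) / 4) := by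
        rw [← Real.exp_add]
        congr 1
        rw [ht2]
        ring

private lemma nPP_mono (N p : ℕ) (z : Fin N → Fin p) (H : Matrix (Fin p) (Fin p) ℝ)
    (hH01 : ∀ i j, 0 ≤ H i j ∧ H i j ≤ 1) (E1 E2 : (Fin N → Fin p) → Prop)
    (h : ∀ zh, E1 zh → E2 zh) : noiseProbP N p z H E1 ≤ noiseProbP N p z H E2 := by
  unfold noiseProbP
  apply Finset.sum_le_sum
  intro zh _
  have hWn : 0 ≤ ∏ a, H (z a) (zh a) := Finset.prod_nonneg fun a _ => (hH01 _ _).1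
  split_ifs with h1 h2
  · exact le_refl _
  · exact absurd (h zh h1) h2
  · exact hWn
  · exact le_refl _

private lemma nPP_or (N p : ℕ) (z : Fin N → Fin p) (H : Matrix (Fin p) (Fin p) ℝ)
    (hH01 : ∀ i j, 0 ≤ H i j ∧ H i j ≤ 1) (E1 E2 : (Fin N → Fin p) → Prop) :
    noiseProbP N p z H (fun zh => E1 zh ∨ E2 zh)
      ≤ noiseProbP N p z H E1 + noiseProbP N p z H E2 := by
  unfold noiseProbP
  rw [← Finset.sum_add_distrib]
  apply Finset.sum_le_sum
  intro zh _
  have hWn : 0 ≤ ∏ a, H (z a) (zh a) := Finset.prod_nonneg fun a _ => (hH01 _ _).1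
  by_cases h1 : E1 zh ∨ E2 zh
  · rw [if_pos h1]
    rcases h1 with h | h
    · rw [if_pos h]
      have : (0:ℝ) ≤ if E2 zh then ∏ a, H (z a) (zh a) else 0 := by split_ifs <;> simp [hWn]
      linarith
    · rw [if_pos h]
      have : (0:ℝ) ≤ if E1 zh then ∏ a, H (z a) (zh a) else 0 := by split_ifs <;> simp [hWn]
      linarith
  · rw [if_neg h1]
    have h2 : (0:ℝ) ≤ if E1 zh then ∏ a, H (z a) (zh a) else 0 := by split_ifs <;> simp [hWn]
    have h3 : (0:ℝ) ≤ if E2 zh then ∏ a, H (z a) (zh a) else 0 := by split_ifs <;> simp [hWn]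
    linarith

private lemma nPP_exists (N p : ℕ) (z : Fin N → Fin p) (H : Matrix (Fin p) (Fin p) ℝ)
    (hH01 : ∀ i j, 0 ≤ H i j ∧ H i j ≤ 1) (B : Fin p → (Fin N → Fin p) → Prop) :
    noiseProbP N p z H (fun zh => ∃ i, B i zh) ≤ ∑ i, noiseProbP N p z H (B i) := by
  unfold noiseProbP
  rw [Finset.sum_comm]
  apply Finset.sum_le_sum
  intro zh _
  have hWn : 0 ≤ ∏ a, H (z a) (zh a) := Finset.prod_nonneg fun a _ => (hH01 _ _).1
  split_ifs with h1
  · obtain ⟨i, hi⟩ := h1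
    calc (∏ a, H (z a) (zh a)) = if B i zh then ∏ a, H (z a) (zh a) else 0 := by rw [if_pos hi]
      _ ≤ ∑ i' : Fin p, if B i' zh then ∏ a, H (z a) (zh a) else 0 := by
          apply Finset.single_le_sum (f := fun i' => if B i' zh then ∏ a, H (z a) (zh a) else 0)
            (fun i' _ => by split_ifs <;> simp [hWn]) (Finset.mem_univ i)
  · apply Finset.sum_nonneg
    intro i _
    split_ifs <;> simp [hWn]

private lemma nPP_compl (N p : ℕ) (z : Fin N → Fin p) (H : Matrix (Fin p) (Fin p) ℝ)
    (hrow : ∀ i, ∑ j, H i j = 1) (E : (Fin N → Fin p) → Prop) :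
    noiseProbP N p z H E = 1 - noiseProbP N p z H (fun zh => ¬ E zh) := by
  have h : noiseProbP N p z H E + noiseProbP N p z H (fun zh => ¬ E zh) = 1 := by
    unfold noiseProbP
    rw [← Finset.sum_add_distrib, ← sum_Wt N p z H hrow]
    apply Finset.sum_congr rfl
    intro zh _
    split_ifs with h1 h2 <;> simp_all
  linarith

end Helpers

/-- For any fixed classifier `f` and `ε ∈ (0,1)`, with probability at least
`1 − 2p·exp(−ε²N/6)` over the flipping noise, `ŵ(f)_i ∈ Σ_j H_{ji}·w(f)_j ± ε` for each `i`. -/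
theorem stmt_10 {X : Type} (N p : ℕ) (hN : 1 ≤ N) (hp : 2 ≤ p)
    (x : Fin N → X) (z : Fin N → Fin p) (y : Fin N → Bool)
    (H : Matrix (Fin p) (Fin p) ℝ)
    (hH01 : ∀ i j, 0 ≤ H i j ∧ H i j ≤ 1) (hrow : ∀ i, ∑ j, H i j = 1)
    (hdiag : ∀ i, 1/2 < H i i)
    (E' : Set (Bool × Bool)) (f : X → Bool)
    (ε : ℝ) (hε : 0 < ε ∧ ε < 1) :
    1 - 2 * p * Real.exp (-(ε ^ 2 * N) / 6) ≤
      noiseProbP N p z H (fun zh => ∀ i : Fin p,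
        wVec N p x y E' f zh i ∈ Set.Icc
          ((∑ j, H j i * wVec N p x y E' f z j) - ε)
          ((∑ j, H j i * wVec N p x y E' f z j) + ε)) := by
  obtain ⟨hε0, hε1⟩ := hε
  have hNpos : (0:ℝ) < N := by exact_mod_cast Nat.lt_of_lt_of_le Nat.zero_lt_one hN
  set c : Fin N → ℝ := fun a => if (f (x a), y a) ∈ E' then 1 else 0 with hcdef
  have hc : ∀ a, c a = 0 ∨ c a = 1 := by
    intro a; by_cases h : (f (x a), y a) ∈ E' <;> simp [hcdef, h]
  -- rewriting wVec as a scaled sum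
  have hw : ∀ (zz : Fin N → Fin p) (i : Fin p),
      wVec N p x y E' f zz i = (∑ a, c a * (if zz a = i then 1 else 0)) / N := by
    intro zz i
    unfold wVec empFreq
    congr 1
    rw [Finset.card_filter]
    push_cast
    apply Finset.sum_congr rfl
    intro a _
    by_cases h1 : (f (x a), y a) ∈ E' <;> by_cases h2 : zz a = i <;> simp [hcdef, h1, h2]
  have hmu : ∀ i : Fin p, ∑ j, H j i * wVec N p x y E' f z j
      = (∑ a, c a * H (z a) i) / N := by
    intro i
    have h1 : ∀ j : Fin p, H j i * wVec N p x y E' f z j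
        = (∑ a, c a * (if z a = j then H j i else 0)) / N := by
      intro j
      rw [hw z j, ← mul_div_assoc]
      congr 1
      rw [Finset.mul_sum]
      exact Finset.sum_congr rfl fun a _ => by split_ifs <;> ring
    simp_rw [h1]
    rw [← Finset.sum_div]
    congr 1
    rw [Finset.sum_comm]
    apply Finset.sum_congr rfl
    intro a _
    rw [← Finset.mul_sum]
    congr 1
    rw [Finset.sum_ite_eq]
    simp
  -- arithmetic helpers
  have harith_up : ∀ Sv Qv : ℝ, Qv + ε * N < Sv → ε ^ 2 * N ≤ ε * (Sv - Qv) := by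
    intro Sv Qv h; nlinarith
  have harith_lo : ∀ Sv Qv : ℝ, Sv < Qv - ε * N → ε ^ 2 * N ≤ -ε * (Sv - Qv) := by
    intro Sv Qv h; nlinarith
  have hkey : ∀ Sv Qv : ℝ, ¬ (Sv / N ∈ Set.Icc (Qv / N - ε) (Qv / N + ε)) →
      Sv < Qv - ε * N ∨ Qv + ε * N < Sv := by
    intro Sv Qv hmem
    rw [Set.mem_Icc, not_and_or, not_le, not_le] at hmem
    rcases hmem with h | h
    · left
      have h2 : Sv / N * N < (Qv / N - ε) * N := mul_lt_mul_of_pos_right h hNpos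
      rw [div_mul_cancel₀ Sv (ne_of_gt hNpos), sub_mul,
        div_mul_cancel₀ Qv (ne_of_gt hNpos)] at h2
      linarith
    · right
      have h2 : (Qv / N + ε) * N < Sv / N * N := mul_lt_mul_of_pos_right h hNpos
      rw [div_mul_cancel₀ Sv (ne_of_gt hNpos), add_mul,
        div_mul_cancel₀ Qv (ne_of_gt hNpos)] at h2
      linarith
  have habs : |ε| ≤ 1 := by rw [abs_of_pos hε0]; linarith
  have habs' : |(-ε)| ≤ 1 := by rw [abs_neg]; exact habs
  -- tail bounds
  have hup : ∀ i : Fin p, noiseProbP N p z H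
      (fun zh => (∑ a, c a * H (z a) i) + ε * ↑N < ∑ a, c a * (if zh a = i then 1 else 0))
      ≤ Real.exp (-(ε ^ 2 * ↑N) / 4) := by
    intro i
    apply tail_le N p z H hH01 hrow c hc i habs rfl
    intro zh h
    exact harith_up _ _ h
  have hlo : ∀ i : Fin p, noiseProbP N p z H
      (fun zh => (∑ a, c a * (if zh a = i then 1 else 0)) < (∑ a, c a * H (z a) i) - ε * ↑N)
      ≤ Real.exp (-(ε ^ 2 * ↑N) / 4) := by
    intro i
    apply tail_le N p z H hH01 hrow c hc i (t := -ε) habs' (by ring)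
    intro zh h
    exact harith_lo _ _ h
  -- union bound on the bad event
  have hbad : noiseProbP N p z H (fun zh => ¬ ∀ i : Fin p,
      wVec N p x y E' f zh i ∈ Set.Icc
        ((∑ j, H j i * wVec N p x y E' f z j) - ε)
        ((∑ j, H j i * wVec N p x y E' f z j) + ε))
      ≤ 2 * p * Real.exp (-(ε ^ 2 * ↑N) / 6) := by
    have hmono := nPP_mono N p z H hH01
      (fun zh => ¬ ∀ i : Fin p,
        wVec N p x y E' f zh i ∈ Set.Icc
          ((∑ j, H j i * wVec N p x y E' f z j) - ε)
          ((∑ j, H j i * wVec N p x y E' f z j) + ε))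
      (fun zh => ∃ i : Fin p,
        (∑ a, c a * (if zh a = i then 1 else 0)) < (∑ a, c a * H (z a) i) - ε * ↑N ∨
        (∑ a, c a * H (z a) i) + ε * ↑N < ∑ a, c a * (if zh a = i then 1 else 0))
      (by
        intro zh hzh
        push_neg at hzh
        obtain ⟨i, hi⟩ := hzh
        rw [hw zh i, hmu i] at hi
        exact ⟨i, hkey _ _ hi⟩)
    refine hmono.trans ?_
    have h2 := nPP_exists N p z H hH01 (fun i zh =>
        (∑ a, c a * (if zh a = i then 1 else 0)) < (∑ a, c a * H (z a) i) - ε * ↑N ∨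
        (∑ a, c a * H (z a) i) + ε * ↑N < ∑ a, c a * (if zh a = i then 1 else 0))
    refine h2.trans ?_
    have h3 : ∀ i : Fin p, noiseProbP N p z H (fun zh =>
        (∑ a, c a * (if zh a = i then 1 else 0)) < (∑ a, c a * H (z a) i) - ε * ↑N ∨
        (∑ a, c a * H (z a) i) + ε * ↑N < ∑ a, c a * (if zh a = i then 1 else 0))
        ≤ 2 * Real.exp (-(ε ^ 2 * ↑N) / 4) := by
      intro i
      refine (nPP_or N p z H hH01 _ _).trans ?_
      have := add_le_add (hlo i) (hup i)
      linarith
    refine (Finset.sum_le_sum fun i _ => h3 i).trans ?_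
    rw [Finset.sum_const, Finset.card_univ, Fintype.card_fin, nsmul_eq_mul]
    have hexp : Real.exp (-(ε ^ 2 * ↑N) / 4) ≤ Real.exp (-(ε ^ 2 * ↑N) / 6) := by
      apply Real.exp_le_exp.mpr
      have : (0:ℝ) ≤ ε ^ 2 * ↑N := by positivity
      linarith
    have hp0 : (0:ℝ) ≤ (p:ℝ) := Nat.cast_nonneg p
    nlinarith [Real.exp_nonneg (-(ε ^ 2 * ↑N) / 4)]
  rw [nPP_compl N p z H hrow]
  linarith
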